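/- Let M be a finite monadic algebra. Then M is isomorphic to a finite direct product of finite simple monadic algebras, where each finite simple closure algebra is isomorphic to some S_l (the Boolean algebra with l atoms in which 0 and 1 are the only closed elements). -/

import Mathlib

/-- A modal algebra: a Boolean algebra with a unary operation `◇` satisfying
`◇⊥ = ⊥` and `◇(a ⊔ b) = ◇a ⊔ ◇b`. -/
class ModalAlg (M : Type) extends BooleanAlgebra M where
  dia : M → M
  dia_bot : dia ⊥ = ⊥
  dia_sup : ∀ a b : M, dia (a ⊔ b) = dia a ⊔ dia b

/-- A closure algebra: a modal algebra satisfying `a ≤ ◇a = ◇◇a`. -/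
class ClosAlg (M : Type) extends ModalAlg M where
  le_dia : ∀ a : M, a ≤ dia a
  dia_dia : ∀ a : M, dia (dia a) = dia a

/-- The possibility operator `◇`. -/
def dia {M : Type} [ModalAlg M] : M → M := ModalAlg.dia

/-- The necessity operator `◻x = ¬◇¬x`. -/
def box {M : Type} [ModalAlg M] (a : M) : M := (dia aᶜ)ᶜ

/-- A homomorphism of closure algebras: it preserves the Boolean structure
(`⊔`, `ᶜ`, `⊥`, and hence `⊓`, `⊤`) and `◇`. -/
structure ClosHom (M N : Type) [ClosAlg M] [ClosAlg N] where
  toFun : M → N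
  map_sup : ∀ a b : M, toFun (a ⊔ b) = toFun a ⊔ toFun b
  map_compl : ∀ a : M, toFun aᶜ = (toFun a)ᶜ
  map_bot : toFun ⊥ = ⊥
  map_dia : ∀ a : M, toFun (dia a) = dia (toFun a)

/-- The two-element closure algebra `2`, with identity `◇`. -/
instance : ModalAlg Bool :=
  { (inferInstance : BooleanAlgebra Bool) with
    dia := id
    dia_bot := rfl
    dia_sup := fun _ _ => rfl }

instance : ClosAlg Bool :=
  { (inferInstance : ModalAlg Bool) with
    le_dia := fun _ => le_rfl
    dia_dia := fun _ => rfl }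

/-- Pointwise closure algebra structure on a product. -/
instance piClosAlg {I : Type} (A : I → Type) [∀ i, ClosAlg (A i)] : ClosAlg (∀ i, A i) :=
  { (inferInstance : BooleanAlgebra (∀ i, A i)) with
    dia := fun x i => dia (x i)
    dia_bot := funext fun _ => ModalAlg.dia_bot
    dia_sup := fun a b => funext fun i => ModalAlg.dia_sup (a i) (b i)
    le_dia := fun a i => ClosAlg.le_dia (a i)
    dia_dia := fun a => funext fun i => ClosAlg.dia_dia (a i) }

/-- The "simple" closure structure on a Boolean algebra: `◇x = ⊤` for `x ≠ ⊥`. -/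
def simpleClos (B : Type) [BooleanAlgebra B] [DecidableEq B] : ClosAlg B :=
  { (inferInstance : BooleanAlgebra B) with
    dia := fun x => if x = ⊥ then ⊥ else ⊤
    dia_bot := by simp
    dia_sup := by
      intro a b
      by_cases ha : a = ⊥ <;> by_cases hb : b = ⊥ <;>
        simp [ha, hb, sup_eq_bot_iff]
    le_dia := by intro a; by_cases h : a = ⊥ <;> simp [h]
    dia_dia := by
      intro a
      by_cases h : a = ⊥ <;> by_cases h2 : (⊤ : B) = ⊥ <;> simp [h, h2] }

/-- The simple monadic algebra `S_l`: the Boolean algebra with `l` atoms (realized as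
`Fin l → Bool`) in which `0` and `1` are the only closed elements, i.e. `◇a = ⊤` for
every `a ≠ ⊥`. -/
noncomputable instance Sl (l : ℕ) : ClosAlg (Fin l → Bool) := simpleClos _

section Aux
variable {M : Type} [ClosAlg M]

lemma dia_bot' : dia (⊥ : M) = ⊥ := ModalAlg.dia_bot
lemma dia_sup' (a b : M) : dia (a ⊔ b) = dia a ⊔ dia b := ModalAlg.dia_sup a b
lemma le_dia' (a : M) : a ≤ dia a := ClosAlg.le_dia a
lemma dia_dia' (a : M) : dia (dia a) = dia a := ClosAlg.dia_dia a

lemma dia_mono {a b : M} (h : a ≤ b) : dia a ≤ dia b := by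
  have h2 : dia (a ⊔ b) = dia a ⊔ dia b := dia_sup' a b
  rw [sup_eq_right.mpr h] at h2
  exact h2 ▸ le_sup_left

lemma atom_le_sup {p a b : M} (hp : IsAtom p) : p ≤ a ⊔ b ↔ p ≤ a ∨ p ≤ b := by
  constructor
  · intro h
    have h1 : p = (p ⊓ a) ⊔ (p ⊓ b) := by rw [← inf_sup_left, inf_eq_left.mpr h]
    rcases (hp.le_iff.mp inf_le_left : p ⊓ a = ⊥ ∨ p ⊓ a = p) with ha | ha
    · rcases (hp.le_iff.mp inf_le_left : p ⊓ b = ⊥ ∨ p ⊓ b = p) with hb | hb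
      · rw [ha, hb, sup_idem] at h1; exact absurd h1 hp.1
      · exact Or.inr (hb ▸ inf_le_right)
    · exact Or.inl (ha ▸ inf_le_right)
  · rintro (h | h) <;> [exact h.trans le_sup_left; exact h.trans le_sup_right]

lemma atom_le_compl {p a : M} (hp : IsAtom p) : p ≤ aᶜ ↔ ¬ p ≤ a := by
  constructor
  · intro h h2
    exact hp.1 (le_bot_iff.mp ((le_inf h2 h).trans_eq inf_compl_eq_bot))
  · intro h
    rcases (atom_le_sup hp).mp (le_top.trans_eq (sup_compl_eq_top (x := a)).symm) with h2 | h2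
    · exact absurd h2 h
    · exact h2

lemma compl_dia_closed (hm : ∀ a : M, dia (box a) = box a) (a : M) :
    dia (dia a)ᶜ = (dia a)ᶜ := by
  have h := hm (dia a)ᶜ
  unfold box at h
  rw [compl_compl] at h
  rw [(dia_dia' a : dia (dia a) = dia a)] at h
  exact h

lemma atom_dia_eq (hm : ∀ a : M, dia (box a) = box a) {p q : M}
    (hp : IsAtom p) (hq : IsAtom q) (h : p ≤ dia q) : dia p = dia q := by
  have h1 : dia p ≤ dia q := (dia_dia' q) ▸ dia_mono h
  have h2 : q ≤ dia p := by
    by_contra hqc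
    have hqc' : q ≤ (dia p)ᶜ := (atom_le_compl hq).mpr hqc
    have hle : dia q ≤ (dia p)ᶜ := (compl_dia_closed hm p) ▸ dia_mono hqc'
    have hple : p ≤ dia p ⊓ (dia p)ᶜ := le_inf (le_dia' p) (h.trans hle)
    exact hp.1 (le_bot_iff.mp (hple.trans_eq inf_compl_eq_bot))
  exact le_antisymm h1 ((dia_dia' p) ▸ dia_mono h2)

lemma atom_le_dia_iff [Finite M] {p : M} (hp : IsAtom p) (a : M) :
    p ≤ dia a ↔ ∃ q : M, IsAtom q ∧ q ≤ a ∧ p ≤ dia q := by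
  constructor
  · induction a using WellFoundedLT.induction with
    | ind a IH =>
      intro h
      rcases (IsAtomic.eq_bot_or_exists_atom_le a) with rfl | ⟨q, hq, hqa⟩
      · rw [dia_bot'] at h; exact absurd (le_bot_iff.mp h) hp.1
      · have hsplit : a = q ⊔ (a ⊓ qᶜ) := by
          rw [sup_inf_left, sup_compl_eq_top, inf_top_eq, sup_eq_right.mpr hqa]
        have hdia : dia a = dia q ⊔ dia (a ⊓ qᶜ) := by
          conv_lhs => rw [hsplit]
          exact dia_sup' q (a ⊓ qᶜ)
        rcases (atom_le_sup hp).mp (hdia ▸ h) with h1 | h1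
        · exact ⟨q, hq, hqa, h1⟩
        · have hlt : a ⊓ qᶜ < a := by
            refine lt_of_le_of_ne inf_le_left (fun he => ?_)
            have hqq : q ≤ qᶜ := hqa.trans (he ▸ inf_le_right)
            exact hq.1 (le_bot_iff.mp ((le_inf le_rfl hqq).trans_eq inf_compl_eq_bot))
          obtain ⟨q', hq', hq'a, hpq'⟩ := IH _ hlt h1
          exact ⟨q', hq', hq'a.trans inf_le_left, hpq'⟩
  · rintro ⟨q, hq, hqa, hpq⟩
    exact hpq.trans (dia_mono hqa)

lemma le_of_atom_le [Finite M] {a b : M} (h : ∀ p : M, IsAtom p → p ≤ a → p ≤ b) : a ≤ b := by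
  rcases IsAtomic.eq_bot_or_exists_atom_le (a ⊓ bᶜ) with hbot | ⟨p, hp, hple⟩
  · have hd : Disjoint a bᶜ := disjoint_iff.mpr hbot
    exact le_of_le_of_eq hd.le_compl_right (compl_compl b)
  · have h1 := h p hp (hple.trans inf_le_left)
    have h2 : p ≤ bᶜ := hple.trans inf_le_right
    exact absurd h1 ((atom_le_compl hp).mp h2)

lemma eq_of_atom_iff [Finite M] {a b : M}
    (h : ∀ p : M, IsAtom p → (p ≤ a ↔ p ≤ b)) : a = b :=
  le_antisymm (le_of_atom_le fun p hp => (h p hp).mp) (le_of_atom_le fun p hp => (h p hp).mpr)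

lemma atom_le_finsetSup {ι : Type} {p : M} (hp : IsAtom p) (s : Finset ι) (f : ι → M) :
    p ≤ s.sup f ↔ ∃ x ∈ s, p ≤ f x := by
  classical
  induction s using Finset.induction_on with
  | empty => simp [le_bot_iff, hp.1]
  | insert _ _ hx IH =>
    rw [Finset.sup_insert, atom_le_sup hp, IH]
    simp

end Aux

lemma Sl_dia {m : ℕ} (x : Fin m → Bool) : dia x = if x = ⊥ then ⊥ else ⊤ := rfl

lemma pi_dia {I : Type} (A : I → Type) [∀ i, ClosAlg (A i)] (x : ∀ i, A i) (i : I) :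
    dia x i = dia (x i) := rfl

/-- every finite monadic algebra `M` (a closure algebra in which every
open element is closed, `◇◻a = ◻a`) is isomorphic to a finite direct product of the
finite simple monadic algebras `S_{l i}`. -/
theorem stmt17 (M : Type) [ClosAlg M] (hfin : Finite M)
    (hmonadic : ∀ a : M, dia (box a) = box a) :
    ∃ (n : ℕ) (l : Fin n → ℕ), (∀ i, 0 < l i) ∧
      ∃ h : ClosHom M (∀ i : Fin n, Fin (l i) → Bool), Function.Bijective h.toFun := by
  classical
  haveI : Fintype M := Fintype.ofFinite M
  -- the type of atoms of M
  let A : Type := {p : M // IsAtom p}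
  -- the equivalence relation `dia p = dia q` on atoms
  let s : Setoid A := ⟨fun p q => dia p.val = dia q.val,
    ⟨fun _ => rfl, Eq.symm, Eq.trans⟩⟩
  let Q := Quotient s
  let cls : A → Q := fun p => Quotient.mk s p
  let n : ℕ := Fintype.card Q
  let eqQ : Q ≃ Fin n := Fintype.equivFin Q
  -- the atoms belonging to the i-th class
  let K : Fin n → Type := fun i => {p : A // cls p = eqQ.symm i}
  let l : Fin n → ℕ := fun i => Fintype.card (K i)
  let g : ∀ i, Fin (l i) ≃ K i := fun i => (Fintype.equivFin (K i)).symm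
  -- the homomorphism
  let F : M → ∀ i : Fin n, Fin (l i) → Bool :=
    fun a i j => decide ((((g i j).val.val : M)) ≤ a)
  have hatom : ∀ i j, IsAtom (((g i j).val.val : M)) := fun i j => (g i j).val.2
  have hcls : ∀ i j, cls ((g i j).val) = eqQ.symm i := fun i j => (g i j).2
  -- any two atoms in the same class have equal `dia`
  have hsame : ∀ (i : Fin n) (j j' : Fin (l i)),
      dia (((g i j).val.val : M)) = dia (((g i j').val.val : M)) := by
    intro i j j'
    exact Quotient.exact ((hcls i j).trans (hcls i j').symm)
  have hl : ∀ i, 0 < l i := by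
    intro i
    refine Fintype.card_pos_iff.mpr ?_
    obtain ⟨P, hP⟩ := Quotient.exists_rep (eqQ.symm i)
    exact ⟨⟨P, hP⟩⟩
  refine ⟨n, l, hl, ⟨⟨F, ?_, ?_, ?_, ?_⟩, ?_, ?_⟩⟩
  · -- map_sup
    intro a b; funext i j
    show decide ((((g i j).val.val : M)) ≤ a ⊔ b) =
      (decide ((((g i j).val.val : M)) ≤ a) || decide ((((g i j).val.val : M)) ≤ b))
    rw [atom_le_sup (hatom i j)]
    by_cases h1 : (((g i j).val.val : M)) ≤ a <;>
      by_cases h2 : (((g i j).val.val : M)) ≤ b <;> simp [h1, h2]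
  · -- map_compl
    intro a; funext i j
    show decide ((((g i j).val.val : M)) ≤ aᶜ) = !decide ((((g i j).val.val : M)) ≤ a)
    rw [atom_le_compl (hatom i j)]
    by_cases h1 : (((g i j).val.val : M)) ≤ a <;> simp [h1]
  · -- map_bot
    funext i j
    show decide ((((g i j).val.val : M)) ≤ ⊥) = false
    simp [le_bot_iff, (hatom i j).1]
  · -- map_dia
    intro a; funext i j
    have hrhs : dia (F a) i j = (if F a i = ⊥ then (⊥ : Fin (l i) → Bool) else ⊤) j := by
      rw [pi_dia, Sl_dia]
    show F (dia a) i j = dia (F a) i j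
    rw [hrhs]
    by_cases hz : F a i = ⊥
    · rw [if_pos hz]
      show decide ((((g i j).val.val : M)) ≤ dia a) = false
      rw [decide_eq_false_iff_not, atom_le_dia_iff (hatom i j)]
      rintro ⟨q, hq, hqa, hpq⟩
      have hdq : dia (((g i j).val.val : M)) = dia q := atom_dia_eq hmonadic (hatom i j) hq hpq
      have hclsq : cls ⟨q, hq⟩ = eqQ.symm i := by
        rw [← hcls i j]
        exact Quotient.sound (hdq.symm : dia q = dia ((g i j).val.val))
      set j' : Fin (l i) := (g i).symm ⟨⟨q, hq⟩, hclsq⟩ with hj'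
      have hval : ((g i j').val.val : M) = q := by
        rw [hj', Equiv.apply_symm_apply]
      have := congrFun hz j'
      rw [show F a i j' = decide ((((g i j').val.val : M)) ≤ a) from rfl, hval] at this
      simp [hqa] at this
    · rw [if_neg hz]
      have : ∃ j', F a i j' = true := by
        by_contra hno
        push_neg at hno
        exact hz (funext fun j' => by simpa using hno j')
      obtain ⟨j', hj'⟩ := this
      have hqa : (((g i j').val.val : M)) ≤ a := of_decide_eq_true hj'
      show decide ((((g i j).val.val : M)) ≤ dia a) = true
      rw [decide_eq_true_iff]
      calc ((g i j).val.val : M) ≤ dia ((g i j).val.val : M) := le_dia' _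
        _ = dia ((g i j').val.val : M) := hsame i j j'
        _ ≤ dia a := dia_mono hqa
  · -- injective
    intro a b hab
    apply eq_of_atom_iff
    intro p hp
    let P : A := ⟨p, hp⟩
    let i : Fin n := eqQ (cls P)
    let j : Fin (l i) := (g i).symm ⟨P, (eqQ.symm_apply_apply (cls P)).symm⟩
    have hPj : (g i j).val = P := by
      show ((g i) ((g i).symm ⟨P, _⟩)).val = P
      rw [Equiv.apply_symm_apply]
    have h1 : decide ((((g i j).val.val : M)) ≤ a) = decide ((((g i j).val.val : M)) ≤ b) :=
      congrFun (congrFun hab i) j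
    rw [hPj] at h1
    exact decide_eq_decide.mp h1
  · -- surjective
    intro f
    let sel : A → Prop := fun P => ∃ i j, (g i j).val = P ∧ f i j = true
    let a : M := (Finset.univ.filter sel).sup (fun P : A => P.val)
    refine ⟨a, ?_⟩
    funext i j
    show decide ((((g i j).val.val : M)) ≤ a) = f i j
    have key : (((g i j).val.val : M)) ≤ a ↔ f i j = true := by
      constructor
      · intro h
        obtain ⟨P, hPmem, hPle⟩ := (atom_le_finsetSup (hatom i j) _ _).mp h
        have hPeq : P = (g i j).val := by
          apply Subtype.ext
          rcases (P.2.le_iff.mp hPle) with hb | hb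
          · exact absurd hb (hatom i j).1
          · exact hb.symm
        have hselP : sel P := (Finset.mem_filter.mp hPmem).2
        obtain ⟨i', j', hg', hf'⟩ := hselP
        rw [hPeq] at hg'
        have hii : i' = i := by
          apply eqQ.symm.injective
          rw [← hcls i' j', ← hcls i j, hg']
        subst hii
        have hjj : j' = j := by
          apply (g i').injective
          exact Subtype.ext hg'
        rw [← hjj]; exact hf'
      · intro hf
        have hselP : sel ((g i j).val) := ⟨i, j, rfl, hf⟩
        have hmem : (g i j).val ∈ Finset.univ.filter sel :=
          Finset.mem_filter.mpr ⟨Finset.mem_univ _, hselP⟩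
        exact Finset.le_sup (f := fun P : A => P.val) hmem
    by_cases hf : f i j = true
    · simp [key, hf]
    · rw [Bool.not_eq_true] at hf
      simp [key, hf]
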